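/- arXiv:2511.19108 — 6 statements merged into one kernel-verified Lean document; each statement's English description precedes it below -/
import Mathlib

section
/- Let p, K be positive integers with K ≤ p, let f₁,…,f_K ∈ [0,1) be pairwise distinct, let s₁,…,s_K ∈ ℂ be nonzero, and choose c₁,…,c_K ∈ ℂ with c_k² = s_k for each k. Define x ∈ ℂ^{2p−1} by x_n = Σ_{k=1}^{K} s_k e^{2πi(n−1)f_k} for n = 1,…,2p−1, and set Z = A(f)·diag(c₁,…,c_K) ∈ ℂ^{p×K}. Then: (i) 𝓗x = Z Z^⊤; (ii) Z Z^H is a Toeplitz matrix, with (Z Z^H)_{i₁,i₂} = Σ_{k=1}^{K} |s_k| e^{2πi(i₁−i₂)f_k}; and (iii) Z has full column rank K. (Existence part of Theorem 3.1.) -/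
open Matrix

/-- The `p × p` Hankel matrix of a vector `x ∈ ℂ^{2p-1}`:
`(𝓗x)_{i₁,i₂} = x_{i₁+i₂-1}` (1-based), i.e. `x (i₁ + i₂)` with 0-based indices. -/
def hankelMat (p : ℕ) (x : Fin (2 * p - 1) → ℂ) : Matrix (Fin p) (Fin p) ℂ :=
  fun i j => x ⟨i.val + j.val, by have := i.isLt; have := j.isLt; omega⟩

/-- Existence part of Theorem 3.1: with `Z = A(f) diag(c)`, `c_k² = s_k`, one has
`𝓗x = Z Zᵀ`, `Z Zᴴ` is Toeplitz with entries `Σ_k |s_k| e^{2πi(i₁-i₂)f_k}`,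
and `Z` has full column rank `K`. -/
theorem stmt1 (p K : ℕ) (hp : 0 < p) (hK : 0 < K) (hKp : K ≤ p)
    (f : Fin K → ℝ) (hf : ∀ k, f k ∈ Set.Ico (0 : ℝ) 1) (hfinj : Function.Injective f)
    (s : Fin K → ℂ) (hs : ∀ k, s k ≠ 0)
    (c : Fin K → ℂ) (hc : ∀ k, c k ^ 2 = s k)
    (x : Fin (2 * p - 1) → ℂ)
    (hx : ∀ n, x n = ∑ k, s k * Complex.exp (2 * Real.pi * Complex.I * (n : ℂ) * (f k : ℂ)))
    (A : Matrix (Fin p) (Fin K) ℂ)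
    (hA : ∀ m k, A m k = Complex.exp (2 * Real.pi * Complex.I * (m : ℂ) * (f k : ℂ)))
    (Z : Matrix (Fin p) (Fin K) ℂ) (hZ : Z = A * Matrix.diagonal c) :
    hankelMat p x = Z * Zᵀ ∧
    (∀ i₁ i₂ : Fin p, (Z * Zᴴ) i₁ i₂ =
      ∑ k, (‖s k‖ : ℂ) *
        Complex.exp (2 * Real.pi * Complex.I * (((i₁ : ℤ) - (i₂ : ℤ)) : ℂ) * (f k : ℂ))) ∧
    (∀ i₁ i₂ j₁ j₂ : Fin p, (i₁ : ℤ) - (i₂ : ℤ) = (j₁ : ℤ) - (j₂ : ℤ) →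
      (Z * Zᴴ) i₁ i₂ = (Z * Zᴴ) j₁ j₂) ∧
    Z.rank = K := by
  have hZe : ∀ (i : Fin p) (k : Fin K),
      Z i k = Complex.exp (2 * Real.pi * Complex.I * (i : ℂ) * (f k : ℂ)) * c k := by
    intro i k
    rw [hZ, Matrix.mul_diagonal, hA]
  have part2 : ∀ i₁ i₂ : Fin p, (Z * Zᴴ) i₁ i₂ =
      ∑ k, (‖s k‖ : ℂ) *
        Complex.exp (2 * Real.pi * Complex.I * (((i₁ : ℤ) - (i₂ : ℤ)) : ℂ) * (f k : ℂ)) := by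
    intro i j
    rw [Matrix.mul_apply]
    apply Finset.sum_congr rfl
    intro k _
    rw [Matrix.conjTranspose_apply, hZe, hZe]
    have habs : c k * (starRingEnd ℂ) (c k) = (‖s k‖ : ℂ) := by
      rw [Complex.mul_conj, ← hc k, Complex.norm_pow, Complex.sq_norm]
    have hconj : (starRingEnd ℂ) (Complex.exp (2 * Real.pi * Complex.I * (j : ℂ) * (f k : ℂ)))
        = Complex.exp (-(2 * Real.pi * Complex.I * (j : ℂ) * (f k : ℂ))) := by
      rw [← Complex.exp_conj]
      congr 1
      simp only [_root_.map_mul, map_ofNat, Complex.conj_ofReal, Complex.conj_I, map_natCast]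
      ring
    rw [star_mul', RCLike.star_def, hconj]
    rw [show ∀ a b : ℂ, Complex.exp a * c k * (Complex.exp b * (starRingEnd ℂ) (c k))
        = (c k * (starRingEnd ℂ) (c k)) * Complex.exp (a + b) from
      fun a b => by rw [Complex.exp_add]; ring, habs]
    congr 2
    push_cast
    ring
  refine ⟨?_, part2, fun i₁ i₂ j₁ j₂ h => by
    have h' : (((i₁ : ℤ) : ℂ) - ((i₂ : ℤ) : ℂ)) = (((j₁ : ℤ) : ℂ) - ((j₂ : ℤ) : ℂ)) := by
      exact_mod_cast congrArg (Int.cast : ℤ → ℂ) h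
    rw [part2, part2, h'], ?_⟩
  · ext i j
    show x ⟨i.val + j.val, _⟩ = (Z * Zᵀ) i j
    rw [hx, Matrix.mul_apply]
    apply Finset.sum_congr rfl
    intro k _
    rw [Matrix.transpose_apply, hZe, hZe]
    rw [show ∀ a b : ℂ, Complex.exp a * c k * (Complex.exp b * c k)
        = c k ^ 2 * (Complex.exp a * Complex.exp b) from fun a b => by ring,
      hc, ← Complex.exp_add]
    congr 2
    push_cast
    ring
  · -- rank
    have hc0 : ∀ k, c k ≠ 0 := fun k h => hs k (by rw [← hc k, h]; ring)
    have hdet : IsUnit (Matrix.diagonal c).det := by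
      rw [Matrix.det_diagonal]
      exact isUnit_iff_ne_zero.mpr (Finset.prod_ne_zero_iff.mpr fun k _ => hc0 k)
    rw [hZ, Matrix.rank_mul_eq_left_of_isUnit_det _ _ hdet]
    refine le_antisymm (le_trans A.rank_le_card_width (by simp)) ?_
    set v : Fin K → ℂ := fun k => Complex.exp (2 * Real.pi * Complex.I * (f k : ℂ)) with hv
    have h2pi : (2 * (Real.pi : ℂ) * Complex.I) ≠ 0 := by
      simp [Real.pi_ne_zero, Complex.I_ne_zero, Complex.ofReal_ne_zero]
    have hvinj : Function.Injective v := by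
      intro a b hab
      apply hfinj
      have h0 : v a / v b = 1 := by
        rw [hab]; exact div_self (Complex.exp_ne_zero _)
      have h1 : Complex.exp (2 * Real.pi * Complex.I * (f a : ℂ)
          - 2 * Real.pi * Complex.I * (f b : ℂ)) = 1 := by
        rw [Complex.exp_sub]; exact h0
      rw [Complex.exp_eq_one_iff] at h1
      obtain ⟨n, hn⟩ := h1
      have h2 : (2 * (Real.pi : ℂ) * Complex.I) * ((f a : ℂ) - (f b : ℂ))
          = (2 * (Real.pi : ℂ) * Complex.I) * (n : ℂ) := by
        rw [mul_sub]; rw [hn]; ring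
      have h3 : (f a : ℂ) - (f b : ℂ) = (n : ℂ) := mul_left_cancel₀ h2pi h2
      have h4 : f a - f b = (n : ℝ) := by
        exact_mod_cast h3
      obtain ⟨ha0, ha1⟩ := hf a
      obtain ⟨hb0, hb1⟩ := hf b
      have hn0 : n = 0 := by
        have hn1 : n < 1 := by exact_mod_cast (by linarith : (n : ℝ) < 1)
        have hn2 : (-1 : ℤ) < n := by exact_mod_cast (by linarith : (-1 : ℝ) < (n : ℝ))
        omega
      rw [hn0] at h4
      simp at h4
      linarith
    let C : Matrix (Fin K) (Fin p) ℂ :=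
      Matrix.of fun i j => if j = Fin.castLE hKp i then 1 else 0
    have hCA : C * A = (Matrix.vandermonde v)ᵀ := by
      ext i k
      simp only [Matrix.mul_apply, Matrix.of_apply, ite_mul, one_mul, zero_mul, C]
      rw [Finset.sum_ite_eq' Finset.univ (Fin.castLE hKp i)]
      simp only [Finset.mem_univ, if_true]
      rw [hA, Matrix.transpose_apply, Matrix.vandermonde, Matrix.of_apply, hv,
        ← Complex.exp_nat_mul]
      congr 1
      push_cast [Fin.coe_castLE]
      ring
    have hdetC : ((Matrix.vandermonde v)ᵀ).det ≠ 0 := by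
      rw [Matrix.det_transpose]
      exact Matrix.det_vandermonde_ne_zero_iff.mpr hvinj
    have hrk : ((Matrix.vandermonde v)ᵀ).rank = K := by
      rw [Matrix.rank_of_isUnit _
        ((Matrix.isUnit_iff_isUnit_det _).mpr (isUnit_iff_ne_zero.mpr hdetC))]
      simp
    calc (K : ℕ) = (C * A).rank := by rw [hCA, hrk]
      _ ≤ A.rank := Matrix.rank_mul_le_right C A
end

section
/- Let p, K be positive integers with K < p, let f₁,…,f_K ∈ [0,1) be pairwise distinct and s₁,…,s_K ∈ ℂ be nonzero. Define x ∈ ℂ^{2p−1} by x_n = Σ_{k=1}^{K} s_k e^{2πi(n−1)f_k}, and define T ∈ ℂ^{p×p} by T_{i₁,i₂} = Σ_{k=1}^{K} |s_k| e^{2πi(i₁−i₂)f_k}. Then T is a Hermitian Toeplitz matrix, and the 2p×2p block matrix [[conj(T), conj(𝓗x)], [𝓗x, T]] is positive semidefinite of rank exactly K. (One direction of the low-rank PSD Hankel–Toeplitz characterization of spectral-sparse signals used in equation (2.4) and Theorem 3.1.) -/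
open Matrix ComplexOrder

lemma expI_conj (t : ℝ) :
    (starRingEnd ℂ) (Complex.exp ((t:ℂ) * Complex.I)) = Complex.exp (-(t:ℂ) * Complex.I) := by
  rw [← Complex.exp_conj, _root_.map_mul, Complex.conj_ofReal, Complex.conj_I]
  congr 1; ring

lemma prod_conj_aux (a t₁ t₂ : ℝ) (ha : 0 ≤ a) :
    ((Real.sqrt a : ℂ) * Complex.exp ((t₁:ℂ) * Complex.I)) *
      (starRingEnd ℂ) ((Real.sqrt a : ℂ) * Complex.exp ((t₂:ℂ) * Complex.I)) =
    (a : ℂ) * Complex.exp (((t₁ - t₂ : ℝ) : ℂ) * Complex.I) := by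
  rw [_root_.map_mul, Complex.conj_ofReal, expI_conj, mul_mul_mul_comm, ← Complex.exp_add,
    ← Complex.ofReal_mul, Real.mul_self_sqrt ha]
  congr 2
  push_cast; ring

lemma prod_aux (a t₁ t₂ : ℝ) (ha : 0 ≤ a) :
    ((Real.sqrt a : ℂ) * Complex.exp ((t₁:ℂ) * Complex.I)) *
      ((Real.sqrt a : ℂ) * Complex.exp ((t₂:ℂ) * Complex.I)) =
    (a : ℂ) * Complex.exp (((t₁ + t₂ : ℝ) : ℂ) * Complex.I) := by
  rw [mul_mul_mul_comm, ← Complex.exp_add, ← Complex.ofReal_mul, Real.mul_self_sqrt ha]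
  congr 2
  push_cast; ring

/-- One direction of the low-rank PSD Hankel–Toeplitz characterization of
spectral-sparse signals: `T` is a Hermitian Toeplitz matrix and the block matrix
`[[conj T, conj (𝓗x)], [𝓗x, T]]` is positive semidefinite of rank exactly `K`. -/
theorem stmt2 (p K : ℕ) (hp : 0 < p) (hK : 0 < K) (hKp : K < p)
    (f : Fin K → ℝ) (hf : ∀ k, f k ∈ Set.Ico (0 : ℝ) 1) (hfinj : Function.Injective f)
    (s : Fin K → ℂ) (hs : ∀ k, s k ≠ 0)
    (x : Fin (2 * p - 1) → ℂ)
    (hx : ∀ n, x n = ∑ k, s k * Complex.exp (2 * Real.pi * Complex.I * (n : ℂ) * (f k : ℂ)))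
    (T : Matrix (Fin p) (Fin p) ℂ)
    (hT : ∀ i₁ i₂, T i₁ i₂ = ∑ k, ((‖s k‖ : ℝ) : ℂ) *
        Complex.exp (2 * Real.pi * Complex.I * (((i₁ : ℤ) - (i₂ : ℤ)) : ℂ) * (f k : ℂ))) :
    T.IsHermitian ∧
    (∀ i₁ i₂ j₁ j₂ : Fin p, (i₁ : ℤ) - (i₂ : ℤ) = (j₁ : ℤ) - (j₂ : ℤ) → T i₁ i₂ = T j₁ j₂) ∧
    (Matrix.fromBlocks (T.map (starRingEnd ℂ)) ((hankelMat p x).map (starRingEnd ℂ))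
        (hankelMat p x) T).PosSemidef ∧
    (Matrix.fromBlocks (T.map (starRingEnd ℂ)) ((hankelMat p x).map (starRingEnd ℂ))
        (hankelMat p x) T).rank = K := by
  have hs0 : ∀ k, (0:ℝ) ≤ ‖s k‖ := fun k => norm_nonneg _
  set θ : Fin K → ℕ → ℝ := fun k n => (s k).arg / 2 + 2 * Real.pi * n * f k with hθdef
  set g : ℕ → Fin K → ℂ :=
    fun n k => (Real.sqrt ‖s k‖ : ℂ) * Complex.exp ((θ k n : ℂ) * Complex.I)
    with hgdef
  set A : Matrix (Fin p ⊕ Fin p) (Fin K) ℂ :=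
    Matrix.of (Sum.elim (fun i k => (starRingEnd ℂ) (g (i : ℕ) k))
      (fun i : Fin p => fun k => g (i : ℕ) k)) with hAdef
  -- product identities
  have hg1 : ∀ (m n : ℕ) (k : Fin K), g m k * (starRingEnd ℂ) (g n k) =
      ((‖s k‖ : ℝ) : ℂ) * Complex.exp (((θ k m - θ k n : ℝ) : ℂ) * Complex.I) :=
    fun m n k => prod_conj_aux _ _ _ (hs0 k)
  have hg2 : ∀ (m n : ℕ) (k : Fin K), g m k * g n k =
      s k * Complex.exp (((2 * Real.pi * m * f k + 2 * Real.pi * n * f k : ℝ) : ℂ) * Complex.I) := by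
    intro m n k
    rw [hgdef]
    dsimp only
    rw [prod_aux _ _ _ (hs0 k)]
    have h1 : (θ k m + θ k n : ℝ) = (s k).arg + (2 * Real.pi * m * f k + 2 * Real.pi * n * f k) := by
      rw [hθdef]; ring
    rw [h1, Complex.ofReal_add, add_mul, Complex.exp_add, ← mul_assoc,
      Complex.norm_mul_exp_arg_mul_I]
  -- the block matrix equals A * Aᴴ
  have hM : Matrix.fromBlocks (T.map (starRingEnd ℂ)) ((hankelMat p x).map (starRingEnd ℂ))
      (hankelMat p x) T = A * Aᴴ := by
    have hH : ∀ i j : Fin p, hankelMat p x i j = ∑ k, g (i : ℕ) k * g (j : ℕ) k := by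
      intro i j
      rw [hankelMat, hx]
      refine Finset.sum_congr rfl fun k _ => ?_
      rw [hg2]
      congr 1
      push_cast
      ring_nf
    ext r r'
    cases r with
    | inl i =>
      cases r' with
      | inl j =>
        simp only [fromBlocks_apply₁₁, Matrix.map_apply, mul_apply, conjTranspose_apply,
          hAdef, of_apply, Sum.elim_inl, RCLike.star_def, Complex.conj_conj]
        rw [hT, map_sum]
        refine Finset.sum_congr rfl fun k _ => ?_
        rw [mul_comm ((starRingEnd ℂ) (g (i:ℕ) k)) (g (j:ℕ) k), hg1, _root_.map_mul,
          Complex.conj_ofReal, ← Complex.exp_conj]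
        congr 2
        simp only [_root_.map_mul, map_ofNat, Complex.conj_I, Complex.conj_ofReal, map_sub,
          map_intCast]
        push_cast [hθdef]
        ring
      | inr j =>
        simp only [fromBlocks_apply₁₂, Matrix.map_apply, mul_apply, conjTranspose_apply,
          hAdef, of_apply, Sum.elim_inl, Sum.elim_inr, RCLike.star_def]
        rw [hH, map_sum]
        refine Finset.sum_congr rfl fun k _ => ?_
        rw [← _root_.map_mul]
    | inr i =>
      cases r' with
      | inl j =>
        simp only [fromBlocks_apply₂₁, mul_apply, conjTranspose_apply,
          hAdef, of_apply, Sum.elim_inl, Sum.elim_inr, RCLike.star_def, Complex.conj_conj]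
        rw [hH]
      | inr j =>
        simp only [fromBlocks_apply₂₂, mul_apply, conjTranspose_apply,
          hAdef, of_apply, Sum.elim_inr, RCLike.star_def]
        rw [hT]
        refine Finset.sum_congr rfl fun k _ => ?_
        rw [hg1]
        congr 2
        push_cast [hθdef]
        ring

  -- the rank of A is K
  set z : Fin K → ℂ := fun k => Complex.exp (((2 * Real.pi * f k : ℝ) : ℂ) * Complex.I) with hzdef
  set d : Fin K → ℂ := fun k =>
    (Real.sqrt ‖s k‖ : ℂ) * Complex.exp ((((s k).arg / 2 : ℝ) : ℂ) * Complex.I)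
    with hddef
  have hgz : ∀ (n : ℕ) (k : Fin K), g n k = d k * z k ^ n := by
    intro n k
    rw [hgdef, hddef, hzdef]
    dsimp only
    rw [← Complex.exp_nat_mul, mul_assoc, ← Complex.exp_add]
    congr 2
    push_cast [hθdef]
    ring
  have hd0 : ∀ k, d k ≠ 0 := by
    intro k
    refine mul_ne_zero ?_ (Complex.exp_ne_zero _)
    rw [Complex.ofReal_ne_zero, Real.sqrt_ne_zero']
    exact norm_pos_iff.mpr (hs k)
  have hzinj : Function.Injective z := by
    intro k l h
    rw [hzdef] at h
    rw [Complex.exp_eq_exp_iff_exists_int] at h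
    obtain ⟨n, hn⟩ := h
    have him := congrArg Complex.im hn
    simp [Complex.add_im, Complex.mul_im] at him
    have hpi := Real.pi_pos
    have hfk := hf k
    have hfl := hf l
    simp only [Set.mem_Ico] at hfk hfl
    have hfkl : f k = f l + n := by
      have h2 : 2 * Real.pi * f k = 2 * Real.pi * f l + (n : ℝ) * (2 * Real.pi) := by
        linarith [him]
      nlinarith [h2]
    have hn0 : n = 0 := by
      have h1 : (n : ℝ) < 1 := by linarith [hfkl, hfk.1, hfk.2, hfl.1, hfl.2]
      have h2 : (-1 : ℝ) < n := by linarith [hfkl, hfk.1, hfk.2, hfl.1, hfl.2]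
      have h1' : n < 1 := by exact_mod_cast h1
      have h2' : (-1 : ℤ) < n := by exact_mod_cast h2
      omega
    apply hfinj
    rw [hfkl, hn0]
    simp
  set V : Matrix (Fin K) (Fin K) ℂ := Matrix.of fun k i => g (i : ℕ) k with hVdef
  have hVfact : V = Matrix.diagonal d * Matrix.vandermonde z := by
    ext k i
    rw [hVdef, Matrix.diagonal_mul]
    simp only [of_apply, Matrix.vandermonde]
    rw [hgz]
  have hVdet : V.det ≠ 0 := by
    rw [hVfact, Matrix.det_mul, Matrix.det_diagonal, Matrix.det_vandermonde]
    refine mul_ne_zero (Finset.prod_ne_zero_iff.mpr fun k _ => hd0 k) ?_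
    refine Finset.prod_ne_zero_iff.mpr fun i _ => Finset.prod_ne_zero_iff.mpr fun j hj => ?_
    rw [sub_ne_zero]
    intro hzz
    have : j = i := hzinj hzz
    simp [this] at hj
  have hVunit : IsUnit V := (Matrix.isUnit_iff_isUnit_det V).mpr (isUnit_iff_ne_zero.mpr hVdet)
  have hrows : LinearIndependent ℂ (fun k => V k) :=
    Matrix.linearIndependent_rows_iff_isUnit.mpr hVunit
  have hcols : LinearIndependent ℂ (fun k => Aᵀ k) := by
    refine LinearIndependent.of_comp
      (LinearMap.funLeft ℂ ℂ (fun i : Fin K => (Sum.inr (Fin.castLE hKp.le i) : Fin p ⊕ Fin p))) ?_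
    have hcomp : (⇑(LinearMap.funLeft ℂ ℂ
        (fun i : Fin K => (Sum.inr (Fin.castLE hKp.le i) : Fin p ⊕ Fin p))) ∘ (fun k => Aᵀ k))
        = fun k => V k := by
      funext k
      funext i
      simp [LinearMap.funLeft_apply, hAdef, hVdef]
    rw [hcomp]
    exact hrows
  have hrankA : A.rank = K := by
    rw [Matrix.rank_eq_finrank_span_cols, finrank_span_eq_card (show LinearIndependent ℂ A.col from hcols), Fintype.card_fin]
  -- assemble
  have hPSD : (Matrix.fromBlocks (T.map (starRingEnd ℂ)) ((hankelMat p x).map (starRingEnd ℂ))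
      (hankelMat p x) T).PosSemidef := by
    rw [hM]; exact Matrix.posSemidef_self_mul_conjTranspose A
  refine ⟨?_, ?_, hPSD, ?_⟩
  · have hHerm := hPSD.isHermitian
    ext i j
    have h2 := congrFun (congrFun hHerm (Sum.inr i)) (Sum.inr j)
    simpa using h2
  · intro i₁ i₂ j₁ j₂ h
    rw [hT, hT]
    have h' := congrArg (fun t : ℤ => (t : ℂ)) h
    push_cast at h'
    push_cast
    rw [h']
  · rw [hM, Matrix.rank_self_mul_conjTranspose, hrankA]
end

section
/- Let p, K be positive integers, Z, ξ, ζ ∈ ℂ^{p×K}, and let O ∈ ℝ^{K×K} be real orthogonal. Then tr( Re{(ZO)^H (ZO)} · Re{(ξO)^H (ζO)} ) = tr( Re{Z^H Z} · Re{ξ^H ζ} ). (Invariance of the Riemannian metric g̃ on the total space under the right action of the real orthogonal group, which makes the metric descend to the quotient.) -/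
open Matrix

lemma aux_conj (K : ℕ) (O : Matrix (Fin K) (Fin K) ℝ) :
    (O.map Complex.ofReal)ᴴ = Oᵀ.map Complex.ofReal := by
  ext i j
  simp [conjTranspose_apply, Matrix.map_apply]

lemma aux_re (K : ℕ) (M : Matrix (Fin K) (Fin K) ℂ) (O : Matrix (Fin K) (Fin K) ℝ) :
    ((Oᵀ.map Complex.ofReal * M * O.map Complex.ofReal).map Complex.re)
      = Oᵀ * M.map Complex.re * O := by
  ext i j
  simp only [Matrix.map_apply, Matrix.mul_apply, Complex.re_sum, Finset.sum_mul,
    Finset.mul_sum]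
  congr 1; ext k
  congr 1; ext l
  simp [Matrix.map_apply, mul_comm, mul_assoc, mul_left_comm]

lemma trace_conj {n : ℕ} (A B O : Matrix (Fin n) (Fin n) ℝ) (hO : O * Oᵀ = 1) :
    (Oᵀ * A * O * (Oᵀ * B * O)).trace = (A * B).trace := by
  have e : Oᵀ * A * O * (Oᵀ * B * O) = (Oᵀ * (A * (O * Oᵀ) * B)) * O := by
    simp only [Matrix.mul_assoc]
  rw [e, Matrix.trace_mul_comm, hO, Matrix.mul_one, ← Matrix.mul_assoc, ← Matrix.mul_assoc, hO,
    Matrix.one_mul]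

/-- Invariance of the Riemannian metric
`g̃_Z(ξ, ζ) = tr( Re{Zᴴ Z} · Re{ξᴴ ζ} )` on the total space under the right action of
the real orthogonal group. -/
theorem stmt5 (p K : ℕ) (hp : 0 < p) (hK : 0 < K)
    (Z ξ ζ : Matrix (Fin p) (Fin K) ℂ)
    (O : Matrix (Fin K) (Fin K) ℝ) (hO₁ : O * Oᵀ = 1) (hO₂ : Oᵀ * O = 1) :
    Matrix.trace
      ((((Z * O.map Complex.ofReal)ᴴ * (Z * O.map Complex.ofReal)).map Complex.re) *
        (((ξ * O.map Complex.ofReal)ᴴ * (ζ * O.map Complex.ofReal)).map Complex.re)) =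
    Matrix.trace (((Zᴴ * Z).map Complex.re) * ((ξᴴ * ζ).map Complex.re)) := by
  have h1 : (Z * O.map Complex.ofReal)ᴴ * (Z * O.map Complex.ofReal)
      = Oᵀ.map Complex.ofReal * (Zᴴ * Z) * O.map Complex.ofReal := by
    simp [conjTranspose_mul, aux_conj, Matrix.mul_assoc]
  have h2 : (ξ * O.map Complex.ofReal)ᴴ * (ζ * O.map Complex.ofReal)
      = Oᵀ.map Complex.ofReal * (ξᴴ * ζ) * O.map Complex.ofReal := by
    simp [conjTranspose_mul, aux_conj, Matrix.mul_assoc]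
  rw [h1, h2, aux_re, aux_re, trace_conj _ _ _ hO₁]
end

section
/- Let p, K be positive integers and Z, ξ ∈ ℂ^{p×K}. Then the following are equivalent: (i) tr( Re{Z^H Z} · Re{ξ^H Z} · Ω ) = 0 for every real skew-symmetric matrix Ω ∈ ℝ^{K×K}; (ii) the real matrix Re{Z^H Z} · Re{ξ^H Z} is symmetric. Moreover, for every real skew-symmetric Ω, g̃_Z(ξ, ZΩ) = tr( Re{Z^H Z} · Re{ξ^H Z} · Ω ); hence ξ is g̃_Z-orthogonal to the vertical space V_Z = { ZΩ : Ω ∈ ℝ^{K×K}, Ω^⊤ = −Ω } if and only if Re{Z^H Z}·Re{ξ^H Z} is symmetric. (Characterization of the horizontal space H_Z in equation (3.10).) -/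
open Matrix

lemma trace_mul_std {K : ℕ} (M : Matrix (Fin K) (Fin K) ℝ) (i j : Fin K) :
    Matrix.trace (M * Matrix.single i j 1) = M j i := by
  simp [Matrix.trace, Matrix.diag, Matrix.mul_apply, Matrix.single, ite_and]

lemma trace_mul_skew_iff {K : ℕ} (M : Matrix (Fin K) (Fin K) ℝ) :
    (∀ Ω : Matrix (Fin K) (Fin K) ℝ, Ωᵀ = -Ω → Matrix.trace (M * Ω) = 0) ↔ M.IsSymm := by
  constructor
  · intro h
    ext i j
    have hskew : (Matrix.single i j (1:ℝ) - Matrix.single j i 1)ᵀ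
        = -(Matrix.single i j (1:ℝ) - Matrix.single j i 1) := by
      ext a b
      simp [Matrix.single, and_comm]
    have := h _ hskew
    rw [Matrix.mul_sub, Matrix.trace_sub, trace_mul_std, trace_mul_std] at this
    simp only [Matrix.transpose_apply]
    linarith
  · intro hM Ω hΩ
    have h1 : Matrix.trace (M * Ω) = Matrix.trace ((M * Ω)ᵀ) := (Matrix.trace_transpose _).symm
    rw [Matrix.transpose_mul, hΩ, hM, Matrix.neg_mul, Matrix.trace_neg,
      Matrix.trace_mul_comm] at h1
    rw [Matrix.trace_mul_comm]
    linarith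

lemma map_re_assoc {p K : ℕ} (M : Matrix (Fin K) (Fin p) ℂ) (N : Matrix (Fin p) (Fin K) ℂ)
    (Ω : Matrix (Fin K) (Fin K) ℝ) :
    (M * (N * Ω.map Complex.ofReal)).map Complex.re = ((M * N).map Complex.re) * Ω := by
  rw [← Matrix.mul_assoc]
  ext i j
  simp [Matrix.mul_apply, Matrix.map_apply, Complex.re_sum, Complex.mul_re]

/-- Characterization of the horizontal space `H_Z` (equation (3.10)):
(i) `tr(Re{ZᴴZ}·Re{ξᴴZ}·Ω) = 0` for all real skew-symmetric `Ω` iff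
`Re{ZᴴZ}·Re{ξᴴZ}` is symmetric; moreover `g̃_Z(ξ, ZΩ) = tr(Re{ZᴴZ}·Re{ξᴴZ}·Ω)`
for every real skew-symmetric `Ω`; hence `ξ ⟂ V_Z` iff `Re{ZᴴZ}·Re{ξᴴZ}` is symmetric. -/
theorem stmt7 (p K : ℕ) (hp : 0 < p) (hK : 0 < K)
    (Z ξ : Matrix (Fin p) (Fin K) ℂ) :
    ((∀ Ω : Matrix (Fin K) (Fin K) ℝ, Ωᵀ = -Ω →
        Matrix.trace (((Zᴴ * Z).map Complex.re) * ((ξᴴ * Z).map Complex.re) * Ω) = 0) ↔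
      (((Zᴴ * Z).map Complex.re) * ((ξᴴ * Z).map Complex.re)).IsSymm) ∧
    (∀ Ω : Matrix (Fin K) (Fin K) ℝ, Ωᵀ = -Ω →
      Matrix.trace (((Zᴴ * Z).map Complex.re) *
          ((ξᴴ * (Z * Ω.map Complex.ofReal)).map Complex.re)) =
        Matrix.trace (((Zᴴ * Z).map Complex.re) * ((ξᴴ * Z).map Complex.re) * Ω)) ∧
    ((∀ Ω : Matrix (Fin K) (Fin K) ℝ, Ωᵀ = -Ω →
        Matrix.trace (((Zᴴ * Z).map Complex.re) *
          ((ξᴴ * (Z * Ω.map Complex.ofReal)).map Complex.re)) = 0) ↔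
      (((Zᴴ * Z).map Complex.re) * ((ξᴴ * Z).map Complex.re)).IsSymm) := by
  have key : ∀ Ω : Matrix (Fin K) (Fin K) ℝ,
      Matrix.trace (((Zᴴ * Z).map Complex.re) *
          ((ξᴴ * (Z * Ω.map Complex.ofReal)).map Complex.re)) =
        Matrix.trace (((Zᴴ * Z).map Complex.re) * ((ξᴴ * Z).map Complex.re) * Ω) := by
    intro Ω
    rw [map_re_assoc, ← Matrix.mul_assoc]
  refine ⟨?_, fun Ω _ => key Ω, ?_⟩
  · exact trace_mul_skew_iff _
  · rw [← trace_mul_skew_iff]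
    exact ⟨fun h Ω hΩ => (key Ω) ▸ h Ω hΩ, fun h Ω hΩ => (key Ω).trans (h Ω hΩ)⟩
end

section
/- Let p, K be positive integers, let Z ∈ ℂ^{p×K} have full column rank K, and let ξ ∈ ℂ^{p×K}. Set M = Re{Z^H Z} and Ω = ½ ( M^{-1} · Re{Z^H ξ} − Re{ξ^H Z} · M^{-1} ). Then: (i) Ω is real skew-symmetric (so ZΩ lies in the vertical space V_Z); (ii) the matrix M · Re{ (ξ − ZΩ)^H Z } is symmetric (so ξ − ZΩ lies in the horizontal space H_Z); hence ξ = (ξ − ZΩ) + ZΩ is the orthogonal decomposition of ξ into its horizontal and vertical components, and the projection of ξ onto H_Z is ξ − ZΩ. (Proposition 3.3.) -/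
open Matrix

lemma mapre_conjT {m n : Type*} (X : Matrix m n ℂ) :
    (Xᴴ).map Complex.re = (X.map Complex.re)ᵀ := by
  ext i j; simp [conjTranspose_apply, map_apply]

lemma mapre_real_mul {m n k : Type*} [Fintype n] (C : Matrix m n ℝ) (D : Matrix n k ℂ) :
    ((C.map Complex.ofReal) * D).map Complex.re = C * D.map Complex.re := by
  ext i j
  simp [mul_apply, map_apply, Complex.re_sum]

lemma posdef_re (p K : ℕ) (Z : Matrix (Fin p) (Fin K) ℂ) (hZ : Z.rank = K) :
    ((Zᴴ * Z).map Complex.re).PosDef := by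
  have hinj : ∀ x : Fin K → ℂ, Z *ᵥ x = 0 → x = 0 := by
    intro x hx
    have h1 : LinearMap.ker Z.mulVecLin = ⊥ := by
      have := LinearMap.finrank_range_add_finrank_ker Z.mulVecLin
      rw [show Module.finrank ℂ (LinearMap.range Z.mulVecLin) = K from hZ] at this
      simp only [Module.finrank_fintype_fun_eq_card, Fintype.card_fin] at this
      exact Submodule.finrank_eq_zero.1 (by omega)
    exact (LinearMap.ker_eq_bot.1 h1).eq_iff.1 (by simpa using hx)
  refine posDef_iff_dotProduct_mulVec.mpr ⟨?_, ?_⟩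
  · show _ = _
    ext i j
    simp only [conjTranspose_apply, map_apply, star_trivial, mul_apply, conjTranspose_apply]
    rw [← Complex.conj_re (∑ x : Fin p, star (Z x i) * Z x j)]
    congr 1
    rw [map_sum]
    exact Finset.sum_congr rfl fun k _ => by simp [mul_comm]
  · intro x hx
    set xc : Fin K → ℂ := fun i => (x i : ℂ) with hxc
    have key : star x ⬝ᵥ ((Zᴴ * Z).map Complex.re) *ᵥ x
        = (star xc ⬝ᵥ (Zᴴ * Z) *ᵥ xc).re := by
      simp [dotProduct, mulVec, map_apply, Complex.re_sum, Finset.mul_sum, hxc,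
        Complex.conj_ofReal]
    have key2 : star xc ⬝ᵥ (Zᴴ * Z) *ᵥ xc = star (Z *ᵥ xc) ⬝ᵥ (Z *ᵥ xc) := by
      rw [dotProduct_mulVec, star_mulVec, dotProduct_mulVec, vecMul_vecMul]
    rw [key, key2]
    have hv : Z *ᵥ xc ≠ 0 := by
      intro h
      apply hx
      have := hinj xc h
      ext i
      have : xc i = 0 := by rw [this]; rfl
      simpa [hxc] using this
    simp only [dotProduct, Pi.star_apply, Complex.re_sum]
    obtain ⟨k, hk⟩ := Function.ne_iff.1 hv
    apply Finset.sum_pos'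
    · intro i _
      simpa [← Complex.normSq_eq_conj_mul_self] using Complex.normSq_nonneg _
    · refine ⟨k, Finset.mem_univ _, ?_⟩
      simp only [Complex.star_def, ← Complex.normSq_eq_conj_mul_self, Complex.ofReal_re]
      exact Complex.normSq_pos.2 hk

/-- Proposition 3.3: with `M = Re{ZᴴZ}` and
`Ω = ½(M⁻¹·Re{Zᴴξ} − Re{ξᴴZ}·M⁻¹)`, the matrix `Ω` is real skew-symmetric
(so `ZΩ ∈ V_Z`) and `M·Re{(ξ − ZΩ)ᴴ Z}` is symmetric (so `ξ − ZΩ ∈ H_Z`);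
hence `ξ ↦ ξ − ZΩ` is the projection onto the horizontal space. -/
theorem stmt8 (p K : ℕ) (hp : 0 < p) (hK : 0 < K)
    (Z ξ : Matrix (Fin p) (Fin K) ℂ) (hZ : Z.rank = K)
    (M : Matrix (Fin K) (Fin K) ℝ) (hM : M = (Zᴴ * Z).map Complex.re)
    (Ω : Matrix (Fin K) (Fin K) ℝ)
    (hΩ : Ω = (1 / 2 : ℝ) •
      (M⁻¹ * (Zᴴ * ξ).map Complex.re - (ξᴴ * Z).map Complex.re * M⁻¹)) :
    Ωᵀ = -Ω ∧ (M * (((ξ - Z * Ω.map Complex.ofReal)ᴴ * Z).map Complex.re)).IsSymm := by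

  have hPD : M.PosDef := hM ▸ posdef_re p K Z hZ
  have hU : IsUnit M.det := hPD.det_pos.ne'.isUnit
  have hMM' : M * M⁻¹ = 1 := mul_nonsing_inv M hU
  have hM'M : M⁻¹ * M = 1 := nonsing_inv_mul M hU
  have hMs : Mᵀ = M := by
    have := hPD.1
    ext i j
    have := congrFun (congrFun this i) j
    simpa [conjTranspose_apply] using this
  have hM's : M⁻¹ᵀ = M⁻¹ := by rw [transpose_nonsing_inv, hMs]
  set A : Matrix (Fin K) (Fin K) ℝ := (Zᴴ * ξ).map Complex.re with hA
  have hB : (ξᴴ * Z).map Complex.re = Aᵀ := by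
    rw [show ξᴴ * Z = (Zᴴ * ξ)ᴴ by rw [conjTranspose_mul, conjTranspose_conjTranspose],
      mapre_conjT, hA]
  have hΩA : Ω = (1/2:ℝ) • (M⁻¹ * A - Aᵀ * M⁻¹) := by rw [hΩ, hB]
  have hskew : Ωᵀ = -Ω := by
    rw [hΩA, transpose_smul, transpose_sub, transpose_mul, transpose_mul, hM's,
      transpose_transpose, ← smul_neg, neg_sub]
  refine ⟨hskew, ?_⟩
  have hΩconjT : (Ω.map Complex.ofReal)ᴴ = (Ωᵀ).map Complex.ofReal := by
    ext i j; simp [conjTranspose_apply, map_apply, Complex.conj_ofReal]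
  have hexp : ((ξ - Z * Ω.map Complex.ofReal)ᴴ * Z).map Complex.re = Aᵀ + Ω * M := by
    rw [conjTranspose_sub, Matrix.sub_mul, conjTranspose_mul, hΩconjT, Matrix.mul_assoc,
      show ((ξᴴ * Z - (Ωᵀ).map Complex.ofReal * (Zᴴ * Z)).map Complex.re)
        = (ξᴴ * Z).map Complex.re - ((Ωᵀ).map Complex.ofReal * (Zᴴ * Z)).map Complex.re from by
          ext i j; simp [map_apply],
      mapre_real_mul, hB, hskew, ← hM]
    simp [sub_eq_add_neg]
  have hMΩM : M * Ω * M = (1/2:ℝ) • (A * M - M * Aᵀ) := by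
    rw [hΩA, Matrix.mul_smul, Matrix.smul_mul]
    congr 1
    rw [Matrix.mul_sub, Matrix.sub_mul, ← Matrix.mul_assoc, ← Matrix.mul_assoc, hMM',
      Matrix.one_mul, Matrix.mul_assoc (M * Aᵀ), hM'M, Matrix.mul_one]
  have hfinal : M * (Aᵀ + Ω * M) = (1/2:ℝ) • (M * Aᵀ + A * M) := by
    rw [Matrix.mul_add, ← Matrix.mul_assoc, hMΩM]
    module
  rw [hexp, hfinal, Matrix.IsSymm, transpose_smul, transpose_add, transpose_mul, transpose_mul,
    hMs, transpose_transpose, add_comm]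
end

section
/- Let p, K be positive integers, let Z ∈ ℂ^{p×K} have full column rank K, and let Ω ∈ ℝ^{K×K} be skew-symmetric. If the real matrix Re{Z^H Z} · Re{ (ZΩ)^H Z } is symmetric, then Ω = 0. Equivalently, the intersection of the vertical space V_Z = { ZΩ : Ω real skew-symmetric } with the horizontal space H_Z = { ξ : Re{Z^H Z}·Re{ξ^H Z} symmetric } is {0}. (Key step in the proof of Proposition 3.4.) -/
open Matrix

lemma map_re_ofReal_mul {m n k : ℕ} (B : Matrix (Fin m) (Fin n) ℝ)
    (C : Matrix (Fin n) (Fin k) ℂ) :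
    ((B.map Complex.ofReal) * C).map Complex.re = B * (C.map Complex.re) := by
  ext i j
  simp [Matrix.mul_apply, Complex.re_sum]

/-- Key step in the proof of Proposition 3.4: for full-column-rank `Z`, if `Ω` is real
skew-symmetric and `Re{ZᴴZ}·Re{(ZΩ)ᴴZ}` is symmetric, then `Ω = 0`; i.e.
`V_Z ∩ H_Z = {0}`. -/
theorem stmt9 (p K : ℕ) (hp : 0 < p) (hK : 0 < K)
    (Z : Matrix (Fin p) (Fin K) ℂ) (hZ : Z.rank = K)
    (Ω : Matrix (Fin K) (Fin K) ℝ) (hΩ : Ωᵀ = -Ω)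
    (h : (((Zᴴ * Z).map Complex.re) *
        (((Z * Ω.map Complex.ofReal)ᴴ * Z).map Complex.re)).IsSymm) :
    Ω = 0 := by
  classical
  set A : Matrix (Fin K) (Fin K) ℝ := (Zᴴ * Z).map Complex.re with hA
  -- A is symmetric
  have hAsymm : Aᵀ = A := by
    ext i j
    simp only [hA, Matrix.transpose_apply, Matrix.map_apply]
    have := congrFun (congrFun (Matrix.isHermitian_conjTranspose_mul_self Z) i) j
    simp only [Matrix.conjTranspose_apply] at this
    rw [← this]
    simp
  -- conjTranspose of real-entried matrix
  have hconj : (Ω.map Complex.ofReal)ᴴ = (-Ω).map Complex.ofReal := by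
    ext i j
    simp [Matrix.conjTranspose_apply, ← hΩ]
  -- rewrite the second factor
  have hfactor : ((Z * Ω.map Complex.ofReal)ᴴ * Z).map Complex.re = -(Ω * A) := by
    rw [Matrix.conjTranspose_mul, hconj, Matrix.mul_assoc, map_re_ofReal_mul]
    ext i j
    simp [hA, Matrix.neg_mul]
  -- so A * Ω * A is symmetric...
  have hsymm : (A * (Ω * A)).IsSymm := by
    have h2 : (A * -(Ω * A)).IsSymm := by rwa [hfactor] at h
    have : (-(A * (Ω * A))).IsSymm := by rwa [Matrix.mul_neg] at h2
    simpa [Matrix.IsSymm, Matrix.transpose_neg, neg_eq_iff_eq_neg, neg_neg,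
      eq_comm] using this
  -- ...and skew-symmetric
  have hskew : (A * (Ω * A))ᵀ = -(A * (Ω * A)) := by
    rw [Matrix.transpose_mul, Matrix.transpose_mul, hAsymm, hΩ]
    simp [Matrix.mul_neg, Matrix.neg_mul, Matrix.mul_assoc]
  have hzero : A * (Ω * A) = 0 := by
    have := hsymm
    rw [Matrix.IsSymm] at this
    rw [this] at hskew
    ext i j
    have h2 := congrFun (congrFun hskew i) j
    simp only [Matrix.neg_apply, Matrix.zero_apply] at h2 ⊢
    linarith
  -- Z has trivial kernel
  have hinj : Function.Injective Z.mulVecLin := by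
    rw [← LinearMap.ker_eq_bot]
    have hrk := LinearMap.finrank_range_add_finrank_ker Z.mulVecLin
    rw [show Module.finrank ℂ (LinearMap.range Z.mulVecLin) = K from hZ,
      Module.finrank_pi, Fintype.card_fin] at hrk
    have : Module.finrank ℂ (LinearMap.ker Z.mulVecLin) = 0 := by omega
    exact Submodule.finrank_eq_zero.mp this
  -- A is positive definite
  have hApd : A.PosDef := by
    refine Matrix.posDef_iff_dotProduct_mulVec.mpr ⟨?_, fun x hx => ?_⟩
    · rw [Matrix.IsHermitian]
      simpa using hAsymm
    · set xc : Fin K → ℂ := fun i => (x i : ℂ) with hxc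
      have hxc0 : xc ≠ 0 := by
        intro hc
        apply hx
        funext i
        have := congrFun hc i
        simpa [hxc] using congrArg Complex.re this
      have hw : Z *ᵥ xc ≠ 0 := by
        intro hc
        apply hxc0
        have : Z.mulVecLin xc = Z.mulVecLin 0 := by simpa [Matrix.mulVecLin_apply] using hc
        exact hinj this
      -- real quadratic form equals re of complex quadratic form
      have key : dotProduct (star x) (A *ᵥ x)
          = (dotProduct (star xc) ((Zᴴ * Z) *ᵥ xc)).re := by
        simp only [dotProduct, Matrix.mulVec, dotProduct, Pi.star_apply,
          star_trivial, hA, Matrix.map_apply, Complex.re_sum, Complex.mul_re, hxc,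
          RCLike.star_def, Complex.conj_ofReal, Complex.ofReal_re, Complex.ofReal_im]
        push_cast
        ring_nf
      rw [key, ← Matrix.mulVec_mulVec, Matrix.dotProduct_mulVec, Matrix.vecMul_conjTranspose,
        star_star]
      set w := Z *ᵥ xc with hwdef
      rw [show dotProduct (star w) w = ∑ i, (Complex.normSq (w i) : ℂ) by
        refine Finset.sum_congr rfl fun i _ => ?_
        simp [Complex.normSq_eq_conj_mul_self]]
      rw [Complex.re_sum]
      push_cast
      have hi : ∃ i, w i ≠ 0 := by
        by_contra hc
        push_neg at hc
        exact hw (funext hc)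
      obtain ⟨i0, hi0⟩ := hi
      have : 0 < Complex.normSq (w i0) := Complex.normSq_pos.mpr hi0
      refine Finset.sum_pos' (fun i _ => Complex.normSq_nonneg _) ⟨i0, Finset.mem_univ _, this⟩
  -- conclude
  have hAunit : IsUnit A := hApd.isUnit
  obtain ⟨u, hu⟩ := hAunit
  have h1 : Ω * A = 0 := by
    have e : (↑u⁻¹ : Matrix (Fin K) (Fin K) ℝ) * (A * (Ω * A)) = Ω * A := by
      rw [← Matrix.mul_assoc, ← hu, Units.inv_mul, Matrix.one_mul]
    rw [← e, hzero, Matrix.mul_zero]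
  have e2 : (Ω * A) * (↑u⁻¹ : Matrix (Fin K) (Fin K) ℝ) = Ω := by
    rw [Matrix.mul_assoc, ← hu, Units.mul_inv, Matrix.mul_one]
  rw [← e2, h1, Matrix.zero_mul]
end
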